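/- Let m ≥ 1, let V be a symmetric positive definite n×n real matrix, and let A₁, …, A_m be symmetric n×n real matrices; define the m×m matrices g and E by g_{μν} = (1/2) tr(V⁻¹ A_μ V⁻¹ A_ν) and E_{μν} = (1/2) tr(A_μ A_ν). Then the regularized volume element satisfies Υ(V) · √(det g) ≤ √(det E) · exp(−tr(adj(V))) · (λ_max(adj(V)))^m · log(1 + (det V)^m)/(det V)^m, and consequently Υ(V) · √(det g) ≤ √(det E) · m^m · e^{−m}, where Υ(V) = exp(−tr(adj(V))) · log(1 + (det V)^m), adj(V) = det(V)·V⁻¹ is the adjugate of V and λ_max denotes the largest eigenvalue. In particular the regularized volume element is uniformly bounded on any set of parameters where V is positive definite. -/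

import Mathlib

open Matrix

/-- Largest eigenvalue of a matrix, as the supremum of its real spectrum. -/
noncomputable def lamMax {n : ℕ} (W : Matrix (Fin n) (Fin n) ℝ) : ℝ :=
  sSup (spectrum ℝ W)

namespace RegVol

variable {k n : ℕ}

open scoped MatrixOrder

lemma psd_trace_nonneg {P : Matrix (Fin k) (Fin k) ℝ} (hP : P.PosSemidef) : 0 ≤ P.trace := by
  rw [Matrix.trace]
  refine Finset.sum_nonneg fun i _ => ?_
  have := hP.dotProduct_mulVec_nonneg (Pi.single i 1)
  simpa [dotProduct, Matrix.mulVec, Pi.single_apply, Finset.sum_ite_eq, diag] using this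

lemma psd_trace_mul_nonneg {P Q : Matrix (Fin k) (Fin k) ℝ} (hP : P.PosSemidef)
    (hQ : Q.PosSemidef) : 0 ≤ (P * Q).trace := by
  have h1 : (P * Q).trace = (CFC.sqrt P * Q * CFC.sqrt P).trace := by
    conv_lhs => rw [← CFC.sqrt_mul_sqrt_self P hP.nonneg]
    rw [Matrix.trace_mul_cycle, Matrix.trace_mul_cycle]
  rw [h1]
  have hh : (CFC.sqrt P).conjTranspose = CFC.sqrt P := (CFC.sqrt_nonneg P).posSemidef.1
  have := hQ.mul_mul_conjTranspose_same (CFC.sqrt P)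
  rw [hh] at this
  exact psd_trace_nonneg this

lemma unit_dot {M : Matrix (Fin k) (Fin k) ℝ} (hM : M.IsHermitian) (i : Fin k) :
    (⇑(hM.eigenvectorBasis i)) ⬝ᵥ (⇑(hM.eigenvectorBasis i)) = 1 := by
  have hn : ‖hM.eigenvectorBasis i‖ = 1 := hM.eigenvectorBasis.orthonormal.1 i
  have h2 : (inner ℝ (hM.eigenvectorBasis i) (hM.eigenvectorBasis i) : ℝ) = 1 := by
    rw [real_inner_self_eq_norm_sq, hn]; norm_num
  rw [← h2, PiLp.inner_apply]
  simp [dotProduct, mul_comm, sq]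

lemma eig_le_of_loewner {M : Matrix (Fin k) (Fin k) ℝ} (hM : M.IsHermitian) {c : ℝ}
    (h : (c • (1 : Matrix (Fin k) (Fin k) ℝ) - M).PosSemidef) (i : Fin k) :
    hM.eigenvalues i ≤ c := by
  have hv := hM.mulVec_eigenvectorBasis i
  have h2 := h.dotProduct_mulVec_nonneg (⇑(hM.eigenvectorBasis i))
  rw [sub_mulVec, smul_mulVec, one_mulVec, hv] at h2
  simp only [star_trivial, dotProduct_sub, dotProduct_smul, unit_dot hM i, smul_eq_mul,
    mul_one] at h2
  linarith

lemma loewner_of_eig_le {M : Matrix (Fin k) (Fin k) ℝ} (hM : M.IsHermitian) {c : ℝ}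
    (h : ∀ i, hM.eigenvalues i ≤ c) :
    (c • (1 : Matrix (Fin k) (Fin k) ℝ) - M).PosSemidef := by
  have hU : (hM.eigenvectorUnitary : Matrix (Fin k) (Fin k) ℝ) *
      star (hM.eigenvectorUnitary : Matrix (Fin k) (Fin k) ℝ) = 1 :=
    Matrix.mem_unitaryGroup_iff.mp hM.eigenvectorUnitary.2
  have key : c • (1 : Matrix (Fin k) (Fin k) ℝ) - M =
      (hM.eigenvectorUnitary : Matrix (Fin k) (Fin k) ℝ) *
        Matrix.diagonal (fun i => c - hM.eigenvalues i) *
        (hM.eigenvectorUnitary : Matrix (Fin k) (Fin k) ℝ)ᴴ := by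
    conv_lhs => rw [hM.spectral_theorem, Unitary.conjStarAlgAut_apply]
    have hd : Matrix.diagonal (fun i => c - hM.eigenvalues i) =
        c • (1 : Matrix (Fin k) (Fin k) ℝ) - Matrix.diagonal (RCLike.ofReal ∘ hM.eigenvalues) := by
      simp [← Matrix.diagonal_one, ← Matrix.diagonal_smul, Matrix.diagonal_sub]
    rw [hd, Matrix.mul_sub, Matrix.sub_mul, Matrix.mul_smul, Matrix.mul_one, Matrix.smul_mul]
    rw [← Matrix.star_eq_conjTranspose, hU]
  rw [key]
  exact (Matrix.posSemidef_diagonal_iff.mpr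
    fun i => sub_nonneg.mpr (h i)).mul_mul_conjTranspose_same _

lemma lamMax_spec [Nonempty (Fin k)] {M : Matrix (Fin k) (Fin k) ℝ} (hM : M.IsHermitian) :
    (∃ i, lamMax M = hM.eigenvalues i) ∧ ∀ i, hM.eigenvalues i ≤ lamMax M := by
  have hs : spectrum ℝ M = Set.range hM.eigenvalues := hM.spectrum_real_eq_range_eigenvalues
  constructor
  · have := (Set.range_nonempty hM.eigenvalues).csSup_mem (Set.finite_range _)
    rw [lamMax, hs]
    exact this.imp fun i hi => hi.symm
  · intro i
    rw [lamMax, hs]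
    exact le_csSup (Set.finite_range _).bddAbove (Set.mem_range_self i)

lemma psd_det_nonneg {A : Matrix (Fin k) (Fin k) ℝ} (hA : A.PosSemidef) : 0 ≤ A.det := by
  rw [hA.1.det_eq_prod_eigenvalues]
  exact Finset.prod_nonneg fun i _ => hA.eigenvalues_nonneg i

lemma det_le_det_loewner {A B : Matrix (Fin k) (Fin k) ℝ} (hA : A.PosSemidef)
    (hB : B.PosSemidef) (hAB : (B - A).PosSemidef) : A.det ≤ B.det := by
  by_cases hdb : B.det = 0
  · obtain ⟨x, hx, hBx⟩ := (Matrix.exists_mulVec_eq_zero_iff).mpr hdb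
    have h1 : x ⬝ᵥ A *ᵥ x ≤ 0 := by
      have := hAB.dotProduct_mulVec_nonneg x
      rw [sub_mulVec, dotProduct_sub, hBx, dotProduct_zero] at this
      simpa using this
    have h2 : x ⬝ᵥ A *ᵥ x = 0 := le_antisymm h1 (by simpa using hA.dotProduct_mulVec_nonneg x)
    have h3 : A *ᵥ x = 0 := (hA.dotProduct_mulVec_zero_iff x).mp (by simpa using h2)
    have : A.det = 0 := Matrix.exists_mulVec_eq_zero_iff.mp ⟨x, hx, h3⟩
    rw [this, hdb]
  · set S := CFC.sqrt B with hSdef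
    have hSS : S * S = B := CFC.sqrt_mul_sqrt_self B hB.nonneg
    have hSps : S.PosSemidef := (CFC.sqrt_nonneg B).posSemidef
    have hSdet : S.det ≠ 0 := by
      intro h
      apply hdb
      rw [← hSS, Matrix.det_mul, h, zero_mul]
    have hSinv : S⁻¹.PosSemidef := hSps.inv
    have hSih : S⁻¹ᴴ = S⁻¹ := hSinv.1
    set M := S⁻¹ * A * S⁻¹ with hMdef
    have hMps : M.PosSemidef := by
      have := hA.mul_mul_conjTranspose_same S⁻¹
      rwa [hSih] at this
    have hScancel : S⁻¹ * B * S⁻¹ = 1 := by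
      rw [← hSS, ← Matrix.mul_assoc, Matrix.mul_assoc (S⁻¹ * S),
        Matrix.mul_nonsing_inv _ (isUnit_iff_ne_zero.mpr hSdet),
        Matrix.nonsing_inv_mul _ (isUnit_iff_ne_zero.mpr hSdet), Matrix.mul_one]
    have h1M : ((1:ℝ) • (1 : Matrix (Fin k) (Fin k) ℝ) - M).PosSemidef := by
      rw [one_smul]
      have := hAB.mul_mul_conjTranspose_same S⁻¹
      rw [hSih] at this
      have heq : S⁻¹ * (B - A) * S⁻¹ = 1 - M := by
        rw [Matrix.mul_sub, Matrix.sub_mul, hScancel, hMdef]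
      rwa [heq] at this
    have hMeig : ∀ i, hMps.1.eigenvalues i ≤ 1 := eig_le_of_loewner hMps.1 h1M
    have hMdet : M.det ≤ 1 := by
      rw [hMps.1.det_eq_prod_eigenvalues]
      exact Finset.prod_le_one (fun i _ => hMps.eigenvalues_nonneg i) (fun i _ => hMeig i)
    have hArec : A.det = M.det * B.det := by
      have hASM : A = S * M * S := by
        rw [hMdef, ← Matrix.mul_assoc, ← Matrix.mul_assoc,
          Matrix.mul_nonsing_inv _ (isUnit_iff_ne_zero.mpr hSdet), Matrix.one_mul,
          Matrix.mul_assoc, Matrix.nonsing_inv_mul _ (isUnit_iff_ne_zero.mpr hSdet),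
          Matrix.mul_one]
      rw [hASM, ← hSS]
      simp only [Matrix.det_mul]
      ring
    rw [hArec]
    calc M.det * B.det ≤ 1 * B.det :=
          mul_le_mul_of_nonneg_right hMdet (psd_det_nonneg hB)
      _ = B.det := one_mul _

lemma herm_trace_eq_sum {M : Matrix (Fin k) (Fin k) ℝ} (hM : M.IsHermitian) :
    M.trace = ∑ i, hM.eigenvalues i := by
  conv_lhs => rw [hM.spectral_theorem, Unitary.conjStarAlgAut_apply]
  rw [Matrix.trace_mul_cycle]
  have hU : star (hM.eigenvectorUnitary : Matrix (Fin k) (Fin k) ℝ) *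
      (hM.eigenvectorUnitary : Matrix (Fin k) (Fin k) ℝ) = 1 :=
    Matrix.mem_unitaryGroup_iff'.mp hM.eigenvectorUnitary.2
  rw [hU, Matrix.one_mul, Matrix.trace_diagonal]
  rfl

lemma psd_smul {M : Matrix (Fin k) (Fin k) ℝ} (hM : M.PosSemidef) {c : ℝ} (hc : 0 ≤ c) :
    (c • M).PosSemidef := by
  refine Matrix.PosSemidef.of_dotProduct_mulVec_nonneg ?_ fun x => ?_
  · rw [Matrix.IsHermitian, Matrix.conjTranspose_smul, hM.1]
    congr
  · rw [Matrix.smul_mulVec, dotProduct_smul, smul_eq_mul]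
    exact mul_nonneg hc (by simpa using hM.dotProduct_mulVec_nonneg x)

lemma posdef_smul {M : Matrix (Fin k) (Fin k) ℝ} (hM : M.PosDef) {c : ℝ} (hc : 0 < c) :
    (c • M).PosDef := by
  refine Matrix.PosDef.of_dotProduct_mulVec_pos ?_ fun x hx => ?_
  · rw [Matrix.IsHermitian, Matrix.conjTranspose_smul, hM.1]
    congr
  · rw [Matrix.smul_mulVec, dotProduct_smul, smul_eq_mul]
    exact mul_pos hc (by simpa using hM.dotProduct_mulVec_pos hx)

lemma gram_expand (B C : Matrix (Fin n) (Fin n) ℝ) (A : Fin k → Matrix (Fin n) (Fin n) ℝ)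
    (x : Fin k → ℝ) :
    (B * (∑ μ, x μ • A μ) * C * (∑ ν, x ν • A ν)).trace
      = ∑ μ, ∑ ν, x μ * x ν * (B * A μ * C * A ν).trace := by
  simp only [Matrix.mul_sum, Matrix.sum_mul, Matrix.trace_sum, Matrix.mul_smul,
    Matrix.smul_mul, Matrix.trace_smul, smul_eq_mul, Finset.mul_sum]
  rw [Finset.sum_comm]
  refine Finset.sum_congr rfl fun μ _ => Finset.sum_congr rfl fun ν _ => ?_
  ring

lemma quad_eq (M : Fin k → Fin k → ℝ) (x : Fin k → ℝ) :
    x ⬝ᵥ ((Matrix.of M) *ᵥ x) = ∑ μ, ∑ ν, x μ * x ν * M μ ν := by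
  simp only [dotProduct, Matrix.mulVec, Matrix.of_apply, Finset.mul_sum]
  refine Finset.sum_congr rfl fun μ _ => Finset.sum_congr rfl fun ν _ => ?_
  ring

lemma trace_quad {P Q : Matrix (Fin n) (Fin n) ℝ} (hP : P.PosSemidef) {c : ℝ}
    (hQ : (c • (1 : Matrix (Fin n) (Fin n) ℝ) - Q).PosSemidef) :
    (P * Q).trace ≤ c * P.trace := by
  have h := psd_trace_mul_nonneg hP hQ
  have heq : (P * (c • (1 : Matrix (Fin n) (Fin n) ℝ) - Q)).trace
      = c * P.trace - (P * Q).trace := by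
    rw [Matrix.mul_sub, Matrix.trace_sub, Matrix.mul_smul, Matrix.mul_one, Matrix.trace_smul,
      smul_eq_mul]
  rw [heq] at h
  linarith

end RegVol

open RegVol

theorem regularized_volume_element_bound {n m : ℕ} (hm : 1 ≤ m)
    (V : Matrix (Fin n) (Fin n) ℝ) (hVs : V.IsSymm) (hV : V.PosDef)
    (A : Fin m → Matrix (Fin n) (Fin n) ℝ) (hA : ∀ μ, (A μ).IsSymm) :
    (Real.exp (-(V.det • V⁻¹).trace) * Real.log (1 + V.det ^ m)) *
        Real.sqrt (Matrix.of fun μ ν : Fin m =>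
          (1/2) * (V⁻¹ * A μ * V⁻¹ * A ν).trace).det
      ≤ Real.sqrt (Matrix.of fun μ ν : Fin m => (1/2) * (A μ * A ν).trace).det *
          Real.exp (-(V.det • V⁻¹).trace) * (lamMax (V.det • V⁻¹)) ^ m *
          (Real.log (1 + V.det ^ m) / V.det ^ m)
    ∧ (Real.exp (-(V.det • V⁻¹).trace) * Real.log (1 + V.det ^ m)) *
        Real.sqrt (Matrix.of fun μ ν : Fin m =>
          (1/2) * (V⁻¹ * A μ * V⁻¹ * A ν).trace).det
      ≤ Real.sqrt (Matrix.of fun μ ν : Fin m => (1/2) * (A μ * A ν).trace).det *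
          ((m : ℝ) ^ m * Real.exp (-(m : ℝ))) := by
  haveI : Nonempty (Fin m) := ⟨⟨0, hm⟩⟩
  set g : Matrix (Fin m) (Fin m) ℝ :=
    Matrix.of fun μ ν : Fin m => (1/2) * (V⁻¹ * A μ * V⁻¹ * A ν).trace with hgdef
  set E : Matrix (Fin m) (Fin m) ℝ :=
    Matrix.of fun μ ν : Fin m => (1/2) * (A μ * A ν).trace with hEdef
  rcases Nat.eq_zero_or_pos n with hn | hn
  · subst hn
    have hg0 : g = 0 := by
      ext μ ν
      simp [hgdef, Matrix.trace]
    have hE0 : E = 0 := by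
      ext μ ν
      simp [hEdef, Matrix.trace]
    rw [hg0, hE0, Matrix.det_zero]
    simp
  · haveI : Nonempty (Fin n) := Fin.pos_iff_nonempty.mp hn
    have hd : 0 < V.det := hV.det_pos
    have hVinv : V⁻¹.PosDef := hV.inv
    set W : Matrix (Fin n) (Fin n) ℝ := V.det • V⁻¹ with hWdef
    have hW : W.PosDef := posdef_smul hVinv hd
    obtain ⟨⟨i0, hi0⟩, hub⟩ := lamMax_spec hW.1
    set lam := lamMax W with hlamdef
    have hlampos : 0 < lam := hi0 ▸ hW.eigenvalues_pos i0
    have htW : lam ≤ W.trace := by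
      rw [herm_trace_eq_sum hW.1, hi0]
      exact Finset.single_le_sum (fun i _ => (hW.eigenvalues_pos i).le) (Finset.mem_univ i0)
    have htpos : 0 < W.trace := lt_of_lt_of_le hlampos htW
    set c := lam / V.det with hcdef
    have hc : 0 ≤ c := div_nonneg hlampos.le hd.le
    have hloew : (c • (1 : Matrix (Fin n) (Fin n) ℝ) - V⁻¹).PosSemidef := by
      have h1 := loewner_of_eig_le hW.1 hub
      have h2 := psd_smul h1 (c := 1 / V.det) (by positivity)
      have heq : (1 / V.det) • (lam • (1 : Matrix (Fin n) (Fin n) ℝ) - W)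
          = c • (1 : Matrix (Fin n) (Fin n) ℝ) - V⁻¹ := by
        rw [smul_sub, smul_smul, hWdef, smul_smul]
        rw [one_div_mul_cancel hd.ne', one_smul]
        congr 1
        rw [hcdef]
        congr 1
        field_simp
      rwa [heq] at h2
    -- quadratic form identities
    have hgq : ∀ x : Fin m → ℝ, x ⬝ᵥ (g *ᵥ x)
        = (1/2) * (V⁻¹ * (∑ μ, x μ • A μ) * V⁻¹ * (∑ ν, x ν • A ν)).trace := by
      intro x
      rw [hgdef, quad_eq, gram_expand]
      rw [Finset.mul_sum]
      refine Finset.sum_congr rfl fun μ _ => ?_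
      rw [Finset.mul_sum]
      refine Finset.sum_congr rfl fun ν _ => ?_
      ring
    have hEq : ∀ x : Fin m → ℝ, x ⬝ᵥ (E *ᵥ x)
        = (1/2) * ((∑ μ, x μ • A μ) * (∑ ν, x ν • A ν)).trace := by
      intro x
      rw [hEdef, quad_eq]
      have := gram_expand (1 : Matrix (Fin n) (Fin n) ℝ) (1 : Matrix (Fin n) (Fin n) ℝ) A x
      simp only [Matrix.one_mul, Matrix.mul_one] at this
      rw [this, Finset.mul_sum]
      refine Finset.sum_congr rfl fun μ _ => ?_
      rw [Finset.mul_sum]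
      refine Finset.sum_congr rfl fun ν _ => ?_
      ring
    -- symmetry of Y
    have hYsym : ∀ x : Fin m → ℝ, ((∑ μ, x μ • A μ) : Matrix (Fin n) (Fin n) ℝ)ᴴ
        = ∑ μ, x μ • A μ := by
      intro x
      ext i j
      simp only [Matrix.conjTranspose_apply, Matrix.sum_apply, Matrix.smul_apply,
        star_trivial, smul_eq_mul]
      exact Finset.sum_congr rfl fun μ _ => by rw [(hA μ).apply]
    -- key scalar inequality
    have hscalar : ∀ x : Fin m → ℝ,
        (V⁻¹ * (∑ μ, x μ • A μ) * V⁻¹ * (∑ ν, x ν • A ν)).trace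
          ≤ c^2 * ((∑ μ, x μ • A μ) * (∑ ν, x ν • A ν)).trace
        ∧ 0 ≤ (V⁻¹ * (∑ μ, x μ • A μ) * V⁻¹ * (∑ ν, x ν • A ν)).trace
        ∧ 0 ≤ ((∑ μ, x μ • A μ) * (∑ ν, x ν • A ν)).trace := by
      intro x
      set Y : Matrix (Fin n) (Fin n) ℝ := ∑ μ, x μ • A μ with hYdef
      have hYh : Yᴴ = Y := hYsym x
      have hP1 : (Y * V⁻¹ * Y).PosSemidef := by
        have := hVinv.posSemidef.mul_mul_conjTranspose_same Y
        rwa [hYh] at this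
      have hP2 : (Y * Y).PosSemidef := by
        have := Matrix.posSemidef_self_mul_conjTranspose Y
        rwa [hYh] at this
      have tr1 : (V⁻¹ * Y * V⁻¹ * Y).trace = ((Y * V⁻¹ * Y) * V⁻¹).trace := by
        rw [Matrix.trace_mul_cycle (V⁻¹ * Y) V⁻¹ Y, ← Matrix.mul_assoc]
      have tr2 : (Y * V⁻¹ * Y).trace = ((Y * Y) * V⁻¹).trace := by
        rw [Matrix.trace_mul_cycle Y V⁻¹ Y]
      have step1 : ((Y * V⁻¹ * Y) * V⁻¹).trace ≤ c * (Y * V⁻¹ * Y).trace :=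
        trace_quad hP1 hloew
      have step2 : ((Y * Y) * V⁻¹).trace ≤ c * (Y * Y).trace :=
        trace_quad hP2 hloew
      have hYYnn : 0 ≤ (Y * Y).trace := psd_trace_nonneg hP2
      have hnn : 0 ≤ ((Y * V⁻¹ * Y) * V⁻¹).trace :=
        psd_trace_mul_nonneg hP1 hVinv.posSemidef
      refine ⟨?_, by rw [tr1]; exact hnn, hYYnn⟩
      calc (V⁻¹ * Y * V⁻¹ * Y).trace = ((Y * V⁻¹ * Y) * V⁻¹).trace := tr1
        _ ≤ c * (Y * V⁻¹ * Y).trace := step1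
        _ = c * ((Y * Y) * V⁻¹).trace := by rw [tr2]
        _ ≤ c * (c * (Y * Y).trace) := by
            exact mul_le_mul_of_nonneg_left step2 hc
        _ = c^2 * (Y * Y).trace := by ring
    -- Hermitian of g and E
    have hgherm : g.IsHermitian := by
      ext μ ν
      simp only [Matrix.conjTranspose_apply, star_trivial, hgdef, Matrix.of_apply]
      congr 1
      rw [Matrix.mul_assoc (V⁻¹ * A ν), Matrix.trace_mul_comm, ← Matrix.mul_assoc,
        Matrix.mul_assoc (V⁻¹ * A μ)]
    have hEherm : E.IsHermitian := by
      ext μ ν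
      simp only [Matrix.conjTranspose_apply, star_trivial, hEdef, Matrix.of_apply]
      rw [Matrix.trace_mul_comm]
    -- PosSemidef structures
    have hgpsd : g.PosSemidef := by
      refine Matrix.PosSemidef.of_dotProduct_mulVec_nonneg hgherm fun x => ?_
      rw [star_trivial, hgq x]
      have := (hscalar x).2.1
      linarith
    have hEpsd : E.PosSemidef := by
      refine Matrix.PosSemidef.of_dotProduct_mulVec_nonneg hEherm fun x => ?_
      rw [star_trivial, hEq x]
      have := (hscalar x).2.2
      linarith
    have hdiff : ((c^2 • E) - g).PosSemidef := by
      refine Matrix.PosSemidef.of_dotProduct_mulVec_nonneg ?_ fun x => ?_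
      · rw [Matrix.IsHermitian, Matrix.conjTranspose_sub, Matrix.conjTranspose_smul,
          hgherm, hEherm]
        congr
      · rw [star_trivial, sub_mulVec, dotProduct_sub, Matrix.smul_mulVec,
          dotProduct_smul, smul_eq_mul, hgq x, hEq x]
        have := (hscalar x).1
        linarith
    -- determinant comparison
    have hdet : g.det ≤ (c^m)^2 * E.det := by
      have h1 := det_le_det_loewner hgpsd (psd_smul hEpsd (sq_nonneg c)) hdiff
      rw [Matrix.det_smul, Fintype.card_fin, ← pow_mul] at h1
      have hpe : (c^m)^2 = c^(2*m) := by rw [← pow_mul, mul_comm]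
      rwa [hpe]
    have hsqrt : Real.sqrt g.det ≤ c^m * Real.sqrt E.det := by
      calc Real.sqrt g.det ≤ Real.sqrt ((c^m)^2 * E.det) := Real.sqrt_le_sqrt hdet
        _ = c^m * Real.sqrt E.det := by
            rw [Real.sqrt_mul (sq_nonneg _), Real.sqrt_sq (pow_nonneg hc m)]
    -- abbreviations
    set L := Real.log (1 + V.det ^ m) with hLdef
    have hL : 0 ≤ L := Real.log_nonneg (by nlinarith [pow_pos hd m])
    have hexp : 0 ≤ Real.exp (-W.trace) := (Real.exp_pos _).le
    have hsE : 0 ≤ Real.sqrt E.det := Real.sqrt_nonneg _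
    have hdm : 0 < V.det ^ m := pow_pos hd m
    -- first inequality
    have hineq1 : (Real.exp (-W.trace) * L) * Real.sqrt g.det
        ≤ Real.sqrt E.det * Real.exp (-W.trace) * lam ^ m * (L / V.det ^ m) := by
      have h1 : (Real.exp (-W.trace) * L) * Real.sqrt g.det
          ≤ (Real.exp (-W.trace) * L) * (c^m * Real.sqrt E.det) :=
        mul_le_mul_of_nonneg_left hsqrt (mul_nonneg hexp hL)
      have h2 : (Real.exp (-W.trace) * L) * (c^m * Real.sqrt E.det)
          = Real.sqrt E.det * Real.exp (-W.trace) * lam ^ m * (L / V.det ^ m) := by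
        rw [hcdef, div_pow]
        ring
      linarith
    refine ⟨hineq1, ?_⟩
    -- second inequality
    have hLd : L / V.det ^ m ≤ 1 := by
      rw [div_le_one hdm]
      have := Real.log_le_sub_one_of_pos (show (0:ℝ) < 1 + V.det ^ m by positivity)
      rw [hLdef]
      linarith
    have hLd0 : 0 ≤ L / V.det ^ m := div_nonneg hL hdm.le
    have hm0 : (0:ℝ) < (m:ℝ) := by exact_mod_cast hm
    -- t^m e^{-t} ≤ m^m e^{-m}
    have hkey : Real.exp (-W.trace) * W.trace ^ m ≤ (m:ℝ)^m * Real.exp (-(m:ℝ)) := by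
      have hlog := Real.log_le_sub_one_of_pos (show 0 < W.trace / m by positivity)
      rw [Real.log_div htpos.ne' hm0.ne'] at hlog
      have hlog2 : (m:ℝ) * Real.log W.trace - W.trace ≤ (m:ℝ) * Real.log m - m := by
        have h3 := mul_le_mul_of_nonneg_left hlog hm0.le
        have h4 : (m:ℝ) * (W.trace / m - 1) = W.trace - m := by field_simp
        nlinarith
      have e1 : Real.exp ((m:ℝ) * Real.log W.trace + (-W.trace))
          = Real.exp (-W.trace) * W.trace ^ m := by
        rw [Real.exp_add, Real.exp_nat_mul, Real.exp_log htpos]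
        ring
      have e2 : Real.exp ((m:ℝ) * Real.log (m:ℝ) + (-(m:ℝ)))
          = (m:ℝ)^m * Real.exp (-(m:ℝ)) := by
        rw [Real.exp_add, Real.exp_nat_mul, Real.exp_log hm0]
      rw [← e1, ← e2]
      exact Real.exp_le_exp.mpr (by linarith)
    have hlamt : lam ^ m ≤ W.trace ^ m := pow_le_pow_left₀ hlampos.le htW m
    have hchain : Real.sqrt E.det * Real.exp (-W.trace) * lam ^ m * (L / V.det ^ m)
        ≤ Real.sqrt E.det * ((m:ℝ)^m * Real.exp (-(m:ℝ))) := by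
      have s1 : Real.sqrt E.det * Real.exp (-W.trace) * lam ^ m * (L / V.det ^ m)
          ≤ Real.sqrt E.det * Real.exp (-W.trace) * lam ^ m * 1 := by
        apply mul_le_mul_of_nonneg_left hLd
        positivity
      have s2 : Real.sqrt E.det * Real.exp (-W.trace) * lam ^ m
          ≤ Real.sqrt E.det * Real.exp (-W.trace) * W.trace ^ m := by
        apply mul_le_mul_of_nonneg_left hlamt
        positivity
      have s3 : Real.sqrt E.det * Real.exp (-W.trace) * W.trace ^ m
          ≤ Real.sqrt E.det * ((m:ℝ)^m * Real.exp (-(m:ℝ))) := by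
        rw [mul_assoc]
        exact mul_le_mul_of_nonneg_left hkey hsE
      calc Real.sqrt E.det * Real.exp (-W.trace) * lam ^ m * (L / V.det ^ m)
          ≤ Real.sqrt E.det * Real.exp (-W.trace) * lam ^ m * 1 := s1
        _ = Real.sqrt E.det * Real.exp (-W.trace) * lam ^ m := mul_one _
        _ ≤ Real.sqrt E.det * Real.exp (-W.trace) * W.trace ^ m := s2
        _ ≤ Real.sqrt E.det * ((m:ℝ)^m * Real.exp (-(m:ℝ))) := s3
    exact le_trans hineq1 hchain
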